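/- Let φ be the golden ratio. For x, y ∈ ℤ write φ⁻⁴x + φ⁻¹y = m + ε₁ and φ⁻³x = n + ε₂ with m, n ∈ ℤ. Then φ³y ≡ 2ε₁ + 3ε₂ (mod ℤ). -/

import Mathlib

noncomputable def gr : ℝ := (1 + Real.sqrt 5) / 2

theorem phi_cube_y_cong (x y m n : ℤ) (ε₁ ε₂ : ℝ)
    (h₁ : (gr ^ 4)⁻¹ * x + gr⁻¹ * y = (m : ℝ) + ε₁)
    (h₂ : (gr ^ 3)⁻¹ * x = (n : ℝ) + ε₂) :
    ∃ k : ℤ, gr ^ 3 * y - (2 * ε₁ + 3 * ε₂) = (k : ℝ) := by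
  have hs : Real.sqrt 5 ^ 2 = 5 := Real.sq_sqrt (by norm_num)
  have hsq : gr ^ 2 = gr + 1 := by
    unfold gr; field_simp; linear_combination hs
  have hinv : gr⁻¹ = gr - 1 := inv_eq_of_mul_eq_one_right (by linear_combination hsq)
  have h3 : (gr ^ 3)⁻¹ = 2 * gr - 3 :=
    inv_eq_of_mul_eq_one_right (by linear_combination (2 * gr ^ 2 - gr + 1) * hsq)
  have h4 : (gr ^ 4)⁻¹ = 5 - 3 * gr :=
    inv_eq_of_mul_eq_one_right (by linear_combination (-3 * gr ^ 3 + 2 * gr ^ 2 - gr + 1) * hsq)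
  refine ⟨3 * y - x + 2 * m + 3 * n, ?_⟩
  rw [hinv, h4] at h₁
  rw [h3] at h₂
  push_cast
  linear_combination ((y : ℝ) * (gr + 1)) * hsq + 2 * h₁ + 3 * h₂
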